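/- arXiv:1110.5814 — 2 statements merged into one kernel-verified Lean document; each statement's English description precedes it below -/
import Mathlib

section
/- For r₀ > 0 and a₁, a₂ ∈ ℝ with r₀⁴ ≥ a₁² a₂², define A = 2π² (r₀² + a₁²)(r₀² + a₂²)/r₀ and J_i = π (r₀² + a₁²)(r₀² + a₂²) a_i / (4 r₀²) for i = 1, 2. Then A ≥ 8π √|J₁ J₂|, with equality if and only if r₀² = |a₁ a₂|. -/
open Real

/-- area–angular momentum inequality for the 5D Myers–Perry
black hole, with equality exactly in the extremal case `r₀² = |a₁ a₂|`. -/
theorem stmt_1 (r0 a1 a2 : ℝ) (hr0 : 0 < r0) (hκ : a1 ^ 2 * a2 ^ 2 ≤ r0 ^ 4)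
    (A J1 J2 : ℝ)
    (hA : A = 2 * π ^ 2 * (r0 ^ 2 + a1 ^ 2) * (r0 ^ 2 + a2 ^ 2) / r0)
    (hJ1 : J1 = π * (r0 ^ 2 + a1 ^ 2) * (r0 ^ 2 + a2 ^ 2) * a1 / (4 * r0 ^ 2))
    (hJ2 : J2 = π * (r0 ^ 2 + a1 ^ 2) * (r0 ^ 2 + a2 ^ 2) * a2 / (4 * r0 ^ 2)) :
    A ≥ 8 * π * Real.sqrt |J1 * J2| ∧
      (A = 8 * π * Real.sqrt |J1 * J2| ↔ r0 ^ 2 = |a1 * a2|) := by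
  have hπ : 0 < π := Real.pi_pos
  have hP : (0:ℝ) < r0 ^ 2 + a1 ^ 2 := by positivity
  have hQ : (0:ℝ) < r0 ^ 2 + a2 ^ 2 := by positivity
  set c : ℝ := π * (r0 ^ 2 + a1 ^ 2) * (r0 ^ 2 + a2 ^ 2) / (4 * r0 ^ 2) with hc
  have hcpos : 0 < c := by positivity
  have hJJ : J1 * J2 = c ^ 2 * (a1 * a2) := by
    rw [hJ1, hJ2, hc]; field_simp
  have habs : |J1 * J2| = c ^ 2 * |a1 * a2| := by
    rw [hJJ, abs_mul, abs_of_nonneg (sq_nonneg c)]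
  have hsqrt : Real.sqrt |J1 * J2| = c * Real.sqrt |a1 * a2| := by
    rw [habs, Real.sqrt_mul (sq_nonneg c), Real.sqrt_sq hcpos.le]
  have hsle : |a1 * a2| ≤ r0 ^ 2 := by
    nlinarith [abs_nonneg (a1 * a2), sq_abs (a1 * a2), sq_nonneg r0]
  have hsr : Real.sqrt |a1 * a2| ≤ r0 := by
    calc Real.sqrt |a1 * a2| ≤ Real.sqrt (r0 ^ 2) := Real.sqrt_le_sqrt hsle
    _ = r0 := Real.sqrt_sq hr0.le
  have hRHS : 8 * π * Real.sqrt |J1 * J2|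
      = 2 * π ^ 2 * (r0 ^ 2 + a1 ^ 2) * (r0 ^ 2 + a2 ^ 2) / r0 ^ 2 * Real.sqrt |a1 * a2| := by
    rw [hsqrt, hc]; field_simp; ring
  have hA' : A = 2 * π ^ 2 * (r0 ^ 2 + a1 ^ 2) * (r0 ^ 2 + a2 ^ 2) / r0 ^ 2 * r0 := by
    rw [hA]; field_simp
  have hk : 0 < 2 * π ^ 2 * (r0 ^ 2 + a1 ^ 2) * (r0 ^ 2 + a2 ^ 2) / r0 ^ 2 := by positivity
  constructor
  · rw [hRHS, hA']
    exact mul_le_mul_of_nonneg_left hsr hk.le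
  · rw [hRHS, hA']
    constructor
    · intro h
      have : r0 = Real.sqrt |a1 * a2| := by
        have := mul_left_cancel₀ (ne_of_gt hk) h
        exact this
      rw [this, Real.sq_sqrt (abs_nonneg _)]
    · intro h
      have : r0 = Real.sqrt |a1 * a2| := by
        rw [← h, Real.sqrt_sq hr0.le]
      rw [← this]
end

section
/- Let c₊, c₋ ∈ ℝ with c₊ ≠ c₋, c₊c₋ ≠ 0, and μ, a₊, a₋ ∈ ℝ^{n-3} with μ·a₊ ≠ 0, μ·a₋ ≠ 0, satisfying the near-horizon constraint c₊²/(μ·a₊) = c₋²/(μ·a₋). Define C₀ = 4c₊²/((c₊ − c₋)(μ·a₊)) (equivalently 4c₋²/((c₊−c₋)(μ·a₋))), J_i = (2π)^{n-3}(c₊ − c₋)μ_i/(16π c₊ c₋), J₊ = J·a₊, J₋ = J·a₋, and A₀ = 2(2π)^{n-3}/C₀. Then A₀ = 8π √|J₊ J₋|. -/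
open Real Matrix

/-- the near-horizon geometry parameter relations imply that the
area saturates the area–angular momentum bound: `A₀ = 8π√|J₊J₋|`. -/
theorem stmt_11 (n : ℕ) (hn : 4 ≤ n) (cp cm : ℝ)
    (hcne : cp ≠ cm) (hc0 : cp * cm ≠ 0)
    (μ ap am : Fin (n - 3) → ℝ)
    (hap : μ ⬝ᵥ ap ≠ 0) (ham : μ ⬝ᵥ am ≠ 0)
    (hconstr : cp ^ 2 / (μ ⬝ᵥ ap) = cm ^ 2 / (μ ⬝ᵥ am))
    (C0 : ℝ) (hC0 : C0 = 4 * cp ^ 2 / ((cp - cm) * (μ ⬝ᵥ ap)))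
    (hC0pos : 0 < C0)
    (J : Fin (n - 3) → ℝ)
    (hJ : ∀ i, J i = (2 * π) ^ (n - 3) * (cp - cm) * μ i / (16 * π * cp * cm))
    (Jp Jm A0 : ℝ) (hJp : Jp = J ⬝ᵥ ap) (hJm : Jm = J ⬝ᵥ am)
    (hA0 : A0 = 2 * (2 * π) ^ (n - 3) / C0) :
    A0 = 8 * π * Real.sqrt |Jp * Jm| := by
  have hcp : cp ≠ 0 := fun h => hc0 (by simp [h])
  have hcm : cm ≠ 0 := fun h => hc0 (by simp [h])
  have hπ : (0:ℝ) < π := Real.pi_pos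
  set K : ℝ := (2 * π) ^ (n - 3) with hK
  have hKpos : 0 < K := pow_pos (by linarith) _
  set d : ℝ := μ ⬝ᵥ ap
  set e : ℝ := μ ⬝ᵥ am
  -- constraint
  have hce : cp ^ 2 * e = cm ^ 2 * d := by
    field_simp at hconstr
    linarith [hconstr]
  -- compute Jp, Jm
  have hJconst : J = fun i => (K * (cp - cm) / (16 * π * cp * cm)) * μ i := by
    funext i; rw [hJ i]; field_simp
  have hJp' : Jp = (K * (cp - cm) / (16 * π * cp * cm)) * d := by
    rw [hJp, hJconst]
    simp [d, dotProduct, Finset.mul_sum, mul_assoc]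
  have hJm' : Jm = (K * (cp - cm) / (16 * π * cp * cm)) * e := by
    rw [hJm, hJconst]
    simp [e, dotProduct, Finset.mul_sum, mul_assoc]
  set x : ℝ := K * (cp - cm) * d / (16 * π * cp ^ 2)
  have hprod : Jp * Jm = x ^ 2 := by
    rw [hJp', hJm']
    have : e = cm ^ 2 * d / cp ^ 2 := by
      field_simp
      linarith [hce]
    rw [this]
    simp only [x]
    field_simp [x]
  -- positivity of (cp-cm)*d
  have hcd : 0 < (cp - cm) * d := by
    rcases div_pos_iff.mp (hC0 ▸ hC0pos) with ⟨_, h⟩ | ⟨h1, _⟩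
    · exact h
    · nlinarith [sq_nonneg cp]
  have hxpos : 0 < x := by
    apply div_pos
    · have := mul_pos hKpos hcd
      nlinarith
    · positivity
  have hsq : Real.sqrt |Jp * Jm| = x := by
    rw [hprod, abs_of_nonneg (sq_nonneg x), Real.sqrt_sq hxpos.le]
  rw [hsq, hA0, hC0]
  simp only [x]
  field_simp [x]
  ring
end
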